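/- If Ψ is a coalition partition of a graph G and v is any vertex of G, then the vertex cover number of the coalition graph CG(G, Ψ) is at most deg_G(v) + 1. -/

import Mathlib

open SimpleGraph

attribute [local instance] Classical.propDecidable

def Dominates {V : Type*} (G : SimpleGraph V) (S : Set V) : Prop :=
  ∀ v, v ∉ S → ∃ u ∈ S, G.Adj u v

def Coalition {V : Type*} (G : SimpleGraph V) (A B : Set V) : Prop :=
  Disjoint A B ∧ ¬ Dominates G A ∧ ¬ Dominates G B ∧ Dominates G (A ∪ B)

def IsCoalitionPartition {V : Type*} (G : SimpleGraph V) (P : Finset (Set V)) : Prop :=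
  (∀ A ∈ P, A.Nonempty) ∧
  (∀ A ∈ P, ∀ B ∈ P, A ≠ B → Disjoint A B) ∧
  (∀ v : V, ∃ A ∈ P, v ∈ A) ∧
  (∀ A ∈ P, (Dominates G A ∧ ∃ v, A = {v}) ∨
    (¬ Dominates G A ∧ ∃ B ∈ P, B ≠ A ∧ Coalition G A B))

noncomputable def coalitionNumber {V : Type*} (G : SimpleGraph V) : ℕ :=
  sSup {n | ∃ P : Finset (Set V), IsCoalitionPartition G P ∧ P.card = n}

def coalitionGraph {V : Type*} (G : SimpleGraph V) (P : Finset (Set V)) :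
    SimpleGraph {A : Set V // A ∈ P} where
  Adj A B := Coalition G A.1 B.1
  symm := by
    constructor
    rintro A B ⟨d, na, nb, u⟩
    exact ⟨d.symm, nb, na, by rwa [Set.union_comm]⟩
  loopless := by
    constructor
    rintro ⟨A, hA⟩ ⟨d, na, nb, u⟩
    rw [Set.union_self] at u
    exact na u

/-- A set of vertices meeting every edge of `H`. -/
def IsVertexCover {W : Type*} (H : SimpleGraph W) (C : Set W) : Prop :=
  ∀ a b, H.Adj a b → a ∈ C ∨ b ∈ C

/-- The vertex cover number: minimum cardinality of a vertex cover. -/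
noncomputable def vertexCoverNumber {W : Type*} (H : SimpleGraph W) : ℕ :=
  sInf {n | ∃ C : Finset W, _root_.IsVertexCover H (↑C) ∧ C.card = n}

theorem stmt2 {V : Type*} [Fintype V] (G : SimpleGraph V) (P : Finset (Set V))
    (hP : IsCoalitionPartition G P) (v : V) :
    vertexCoverNumber (coalitionGraph G P) ≤ G.degree v + 1 := by
  obtain ⟨hne, hdisj, hcov, _⟩ := hP
  -- choice of part containing each vertex
  have hf : ∀ u : V, ∃ A, ∃ h : A ∈ P, u ∈ A := by
    intro u; obtain ⟨A, hA, huA⟩ := hcov u; exact ⟨A, hA, huA⟩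
  choose f hfP hfmem using hf
  have huniq : ∀ (u : V) (A : Set V), A ∈ P → u ∈ A → f u = A := by
    intro u A hA huA
    by_contra hne'
    exact Set.disjoint_left.mp (hdisj _ (hfP u) _ hA hne') (hfmem u) huA
  set N : Finset V := insert v (G.neighborFinset v) with hN
  set C : Finset {A : Set V // A ∈ P} := N.image (fun u => ⟨f u, hfP u⟩) with hC
  have hcover : _root_.IsVertexCover (coalitionGraph G P) (↑C) := by
    rintro ⟨A, hA⟩ ⟨B, hB⟩ ⟨hd, hna, hnb, hdom⟩
    by_cases hv : v ∈ A ∪ B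
    · rcases hv with hv | hv
      · left
        simp only [hC, Finset.coe_image, Set.mem_image, Finset.mem_coe]
        exact ⟨v, by simp [hN], by simp [huniq v A hA hv]⟩
      · right
        simp only [hC, Finset.coe_image, Set.mem_image, Finset.mem_coe]
        exact ⟨v, by simp [hN], by simp [huniq v B hB hv]⟩
    · obtain ⟨u, hu, hadj⟩ := hdom v hv
      have huN : u ∈ N := by
        simp [hN, SimpleGraph.mem_neighborFinset, hadj.symm]
      rcases hu with hu | hu
      · left
        simp only [hC, Finset.coe_image, Set.mem_image, Finset.mem_coe]
        exact ⟨u, huN, by simp [huniq u A hA hu]⟩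
      · right
        simp only [hC, Finset.coe_image, Set.mem_image, Finset.mem_coe]
        exact ⟨u, huN, by simp [huniq u B hB hu]⟩
  have hcard : C.card ≤ G.degree v + 1 := by
    calc C.card ≤ N.card := Finset.card_image_le
    _ ≤ (G.neighborFinset v).card + 1 := Finset.card_insert_le _ _
    _ = G.degree v + 1 := by rw [G.card_neighborFinset_eq_degree]
  calc vertexCoverNumber (coalitionGraph G P) ≤ C.card :=
        Nat.sInf_le ⟨C, hcover, rfl⟩
    _ ≤ G.degree v + 1 := hcard
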